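/- Fix ν ∈ (0,1) and define u(Δ) = (exp(Δ) − 1)/( exp(Δ/(1−ν)) − exp(−ν·Δ/(1−ν)) ) − h(ν). Then u is decreasing in Δ on the interval (0, −ln ν]. -/

import Mathlib

open Real MeasureTheory Finset

set_option linter.unusedSectionVars false

noncomputable section

variable {ι : Type*} [Fintype ι] [DecidableEq ι]

/-- The log-likelihood update function `J(y) = (1-ν)y + ln ν`. -/
def Jfun (ν y : ℝ) : ℝ := (1 - ν) * y + Real.log ν

/-- `h(ν) = exp(ν ln ν/(1-ν)) - exp(ln ν/(1-ν))`. -/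
def hfun (ν : ℝ) : ℝ :=
  Real.exp (ν * Real.log ν / (1 - ν)) - Real.exp (Real.log ν / (1 - ν))

/-- `g(ν) = exp(ln ν/(1-ν)) (1/(ν+1) - ln ν/(1-ν))`. -/
def gfun (ν : ℝ) : ℝ :=
  Real.exp (Real.log ν / (1 - ν)) * (1 / (ν + 1) - Real.log ν / (1 - ν))

/-- Kronecker delta `δ[a,x]` as a real number. -/
def kdelta (a x : ι) : ℝ := if x = a then 1 else 0

theorem univ_nonempty_of_card (hcard : 2 ≤ Fintype.card ι) :
    (Finset.univ : Finset ι).Nonempty := by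
  rw [← Finset.card_pos]
  have : (Finset.univ : Finset ι).card = Fintype.card ι := rfl
  omega

theorem erase_nonempty_of_card (hcard : 2 ≤ Fintype.card ι) (a : ι) :
    ((Finset.univ : Finset ι).erase a).Nonempty := by
  rw [← Finset.card_pos, Finset.card_erase_of_mem (Finset.mem_univ a)]
  have : (Finset.univ : Finset ι).card = Fintype.card ι := rfl
  omega

theorem pairs_nonempty_of_card (hcard : 2 ≤ Fintype.card ι) :
    ((Finset.univ : Finset (ι × ι)).filter fun p => p.1 ≠ p.2).Nonempty := by
  obtain ⟨a, b, hab⟩ := Fintype.exists_pair_of_one_lt_card (α := ι) (by omega)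
  exact ⟨(a, b), by simp [hab]⟩

/-- `max_{â ≠ a} m[â]`. -/
def maxOther (hcard : 2 ≤ Fintype.card ι) (m : ι → ℝ) (a : ι) : ℝ :=
  ((Finset.univ : Finset ι).erase a).sup' (erase_nonempty_of_card hcard a) m

/-- `ξ(a; m)`. -/
def xi (ν : ℝ) (hcard : 2 ≤ Fintype.card ι) (m : ι → ℝ) (a : ι) : ℝ :=
  if maxOther hcard m a - m a < Real.log ν then Real.exp (m a)
  else Real.exp (maxOther hcard m a)
    + hfun ν * Real.exp ((m a - ν * maxOther hcard m a) / (1 - ν))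

/-- `min_{x_i ≠ x_j} (m[x_i] - ν m[x_j])`, over ordered pairs of distinct indices. -/
def minPair (ν : ℝ) (hcard : 2 ≤ Fintype.card ι) (m : ι → ℝ) : ℝ :=
  (((Finset.univ : Finset (ι × ι)).filter fun p => p.1 ≠ p.2).inf'
    (pairs_nonempty_of_card hcard)) (fun p => m p.1 - ν * m p.2)

/-- The feedback density `f(y | m, a) = b[a] ν e^{-νy} + (1-b[a]) e^{-y}`. -/
def fdens (ν : ℝ) (m : ι → ℝ) (a : ι) (y : ℝ) : ℝ :=
  (Real.exp (m a) / ∑ l, Real.exp (m l)) * (ν * Real.exp (-ν * y))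
    + (1 - Real.exp (m a) / ∑ l, Real.exp (m l)) * Real.exp (-y)

/-- Terminal value `V_L(m) = max_x exp(m[x]) / ∑_l exp(m[l])`. -/
def Vterm (hcard : 2 ≤ Fintype.card ι) (m : ι → ℝ) : ℝ :=
  ((Finset.univ : Finset ι).sup' (univ_nonempty_of_card hcard) fun x => Real.exp (m x))
    / ∑ l, Real.exp (m l)


lemma sinh_mul_lt (ν s : ℝ) (h0 : 0 < ν) (h1 : ν < 1) (hs : 0 < s) :
    Real.sinh (ν * s) < ν * Real.sinh s := by
  have key : StrictMonoOn (fun t => ν * Real.sinh t - Real.sinh (ν * t)) (Set.Ici 0) := by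
    apply strictMonoOn_of_deriv_pos (convex_Ici 0)
    · fun_prop
    · intro t ht
      rw [interior_Ici] at ht
      have hd : HasDerivAt (fun t => ν * Real.sinh t - Real.sinh (ν * t))
          (ν * Real.cosh t - ν * Real.cosh (ν * t)) t := by
        have h1' : HasDerivAt (fun t : ℝ => ν * Real.sinh t) (ν * Real.cosh t) t :=
          (Real.hasDerivAt_sinh t).const_mul ν
        have hlin : HasDerivAt (fun y : ℝ => ν * y) ν t := by
          simpa using (hasDerivAt_id t).const_mul ν
        have h2' : HasDerivAt (fun t : ℝ => Real.sinh (ν * t)) (Real.cosh (ν * t) * ν) t :=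
          (Real.hasDerivAt_sinh (ν * t)).comp t hlin
        have := h1'.sub h2'
        rw [mul_comm (Real.cosh (ν * t)) ν] at this
        exact this
      rw [hd.deriv]
      have ht' : (0:ℝ) < t := ht
      have : Real.cosh (ν * t) < Real.cosh t := by
        rw [Real.cosh_lt_cosh, abs_of_pos ht', abs_of_pos (by positivity)]
        nlinarith [mul_pos (show (0:ℝ) < 1 - ν by linarith) ht']
      nlinarith
  have := key (le_refl (0:ℝ)) (le_of_lt hs) hs
  simpa using this

/-- `u(Δ) = (e^Δ - 1)/(e^{Δ/(1-ν)} - e^{-νΔ/(1-ν)}) - h(ν)` is decreasing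
in `Δ` on `(0, -ln ν]`. -/
theorem u_strictAntiOn (ν : ℝ) (hν : ν ∈ Set.Ioo (0:ℝ) 1) :
    StrictAntiOn
      (fun Δ : ℝ =>
        (Real.exp Δ - 1) / (Real.exp (Δ / (1 - ν)) - Real.exp (-ν * Δ / (1 - ν))) - hfun ν)
      (Set.Ioc 0 (-Real.log ν)) := by
  obtain ⟨hν0, hν1⟩ := hν
  have h1ν : (0:ℝ) < 1 - ν := by linarith
  have hDpos : ∀ x : ℝ, 0 < x →
      0 < Real.exp (x / (1 - ν)) - Real.exp (-ν * x / (1 - ν)) := by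
    intro x hx
    have h : -ν * x / (1 - ν) < x / (1 - ν) := by
      rw [div_lt_div_iff₀ h1ν h1ν]
      nlinarith [mul_pos hx h1ν, mul_pos (mul_pos hν0 hx) h1ν]
    have := Real.exp_lt_exp.2 h
    linarith
  apply strictAntiOn_of_deriv_neg (convex_Ioc 0 (-Real.log ν))
  · apply ContinuousOn.sub _ continuousOn_const
    apply ContinuousOn.div (by fun_prop) (by fun_prop)
    intro x hx
    exact ne_of_gt (hDpos x hx.1)
  · intro x hx
    rw [interior_Ioc] at hx
    have hx0 : 0 < x := hx.1
    set A := Real.exp (x / (1 - ν)) with hA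
    set B := Real.exp (-ν * x / (1 - ν)) with hB
    have hD : HasDerivAt (fun Δ : ℝ => Real.exp (Δ / (1 - ν)) - Real.exp (-ν * Δ / (1 - ν)))
        (A * (1 / (1 - ν)) - B * (-ν / (1 - ν))) x := by
      have hA' : HasDerivAt (fun Δ : ℝ => Real.exp (Δ / (1 - ν))) (A * (1 / (1 - ν))) x := by
        have := (Real.hasDerivAt_exp (x / (1 - ν))).comp x
          ((hasDerivAt_id x).div_const (1 - ν))
        simpa [hA, div_eq_mul_inv, one_div, Function.comp_def] using this
      have hB' : HasDerivAt (fun Δ : ℝ => Real.exp (-ν * Δ / (1 - ν))) (B * (-ν / (1 - ν))) x := by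
        have hlin : HasDerivAt (fun Δ : ℝ => -ν * Δ / (1 - ν)) (-ν / (1 - ν)) x := by
          have := ((hasDerivAt_id x).const_mul (-ν)).div_const (1 - ν)
          simpa [mul_comm] using this
        exact (Real.hasDerivAt_exp (-ν * x / (1 - ν))).comp x hlin
      exact hA'.sub hB'
    have hN : HasDerivAt (fun Δ : ℝ => Real.exp Δ - 1) (Real.exp x) x :=
      (Real.hasDerivAt_exp x).sub_const 1
    have hDne : A - B ≠ 0 := ne_of_gt (hDpos x hx0)
    have hf : HasDerivAt (fun Δ : ℝ =>
        (Real.exp Δ - 1) / (Real.exp (Δ / (1 - ν)) - Real.exp (-ν * Δ / (1 - ν))) - hfun ν)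
        ((Real.exp x * (A - B) - (Real.exp x - 1) * (A * (1 / (1 - ν)) - B * (-ν / (1 - ν))))
          / (A - B) ^ 2) x := (hN.div hD hDne).sub_const (hfun ν)
    rw [hf.deriv]
    apply div_neg_of_neg_of_pos _ (by positivity)
    set s := x / (1 - ν) with hs
    have hspos : 0 < s := by positivity
    have hsinh := sinh_mul_lt ν s hν0 hν1 hspos
    set a := Real.exp s with ha
    set b := Real.exp (ν * s) with hb
    have hapos : 0 < a := Real.exp_pos _
    have hbpos : 0 < b := Real.exp_pos _
    have hsx : (1 - ν) * s = x := by rw [hs]; field_simp [h1ν.ne']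
    have hBb : B = b⁻¹ := by
      rw [hB, hb, ← Real.exp_neg]
      congr 1
      field_simp [hs]
      linear_combination hsx
    have hxab : Real.exp x = a * b⁻¹ := by
      rw [ha, hb, ← Real.exp_neg, ← Real.exp_add]
      congr 1
      field_simp [hs]
      linear_combination -hsx
    have hsinh' : b - b⁻¹ < ν * (a - a⁻¹) := by
      have h1 : Real.sinh (ν * s) = (b - b⁻¹) / 2 := by
        rw [Real.sinh_eq, hb, Real.exp_neg]
      have h2 : Real.sinh s = (a - a⁻¹) / 2 := by
        rw [Real.sinh_eq, ha, Real.exp_neg]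
      rw [h1, h2] at hsinh
      linarith
    have h3 : a * (b ^ 2 - 1) < ν * b * (a ^ 2 - 1) := by
      have hm := mul_lt_mul_of_pos_left hsinh' (mul_pos hapos hbpos)
      have hai : a * a⁻¹ = 1 := mul_inv_cancel₀ (ne_of_gt hapos)
      have hbi : b * b⁻¹ = 1 := mul_inv_cancel₀ (ne_of_gt hbpos)
      have e1 : a * b * (b - b⁻¹) = a * b ^ 2 - a := by field_simp
      have e2 : a * b * (ν * (a - a⁻¹)) = ν * b * a ^ 2 - ν * b := by field_simp
      rw [e1, e2] at hm
      nlinarith [hm]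
    have hAa : A = a := rfl
    rw [hxab, hBb, hAa]
    have heq : a * b⁻¹ * (a - b⁻¹) - (a * b⁻¹ - 1) * (a * (1 / (1 - ν)) - b⁻¹ * (-ν / (1 - ν)))
        = (a * (b ^ 2 - 1) - ν * b * (a ^ 2 - 1)) / ((1 - ν) * b ^ 2) := by
      field_simp
      ring
    rw [heq]
    exact div_neg_of_neg_of_pos (by linarith) (by positivity)


end
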